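/- For every integer n ≥ 2, the Möbius function satisfies μ(n) = -∑_{i=1}^{⌊√n⌋} ∑_{j=1}^{⌊√n⌋} μ(i)·μ(j)·[i·j divides n], where [i·j divides n] equals 1 if i·j ∣ n and 0 otherwise. -/

import Mathlib

open ArithmeticFunction Finset

lemma sum_mu_divisors (m : ℕ) :
    ∑ d ∈ m.divisors, (moebius d : ℤ) = if m = 1 then 1 else 0 := by
  rw [← coe_mul_zeta_apply, moebius_mul_coe_zeta, one_apply]

lemma inner_sum_eq (n i : ℕ) (hn : 2 ≤ n) (hi1 : 1 ≤ i) (hin : i ≤ n) :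
    ∑ j ∈ Finset.Icc 1 n, (moebius j : ℤ) * (if (i * j) ∣ n then 1 else 0) =
      if i = n then 1 else 0 := by
  by_cases hdvd : i ∣ n
  · have hipos : 0 < i := hi1
    have hq : n / i ≠ 0 := (Nat.div_pos hin hipos).ne'
    have hcond : ∀ j, (i * j ∣ n) ↔ j ∣ n / i := fun j =>
      (Nat.dvd_div_iff_mul_dvd hdvd).symm
    calc ∑ j ∈ Finset.Icc 1 n, (moebius j : ℤ) * (if (i * j) ∣ n then 1 else 0)
        = ∑ j ∈ Finset.Icc 1 n, (if j ∣ n / i then (moebius j : ℤ) else 0) := by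
          refine Finset.sum_congr rfl fun j _ => ?_
          simp only [hcond j, mul_ite, mul_one, mul_zero]
      _ = ∑ j ∈ (Finset.Icc 1 n).filter (· ∣ n / i), (moebius j : ℤ) :=
          (Finset.sum_filter _ _).symm
      _ = ∑ j ∈ (n / i).divisors, (moebius j : ℤ) := by
          apply Finset.sum_congr _ fun _ _ => rfl
          ext a
          simp only [Finset.mem_filter, Finset.mem_Icc, Nat.mem_divisors]
          constructor
          · rintro ⟨_, ha⟩; exact ⟨ha, hq⟩
          · rintro ⟨ha, -⟩
            have h1 : 1 ≤ a := Nat.pos_of_dvd_of_pos ha (Nat.pos_of_ne_zero hq)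
            have h2 : a ≤ n / i := Nat.le_of_dvd (Nat.pos_of_ne_zero hq) ha
            exact ⟨⟨h1, h2.trans (Nat.div_le_self n i)⟩, ha⟩
      _ = if n / i = 1 then 1 else 0 := sum_mu_divisors _
      _ = if i = n then 1 else 0 := by
          congr 1
          simp only [eq_iff_iff]
          constructor
          · intro h
            have := Nat.div_mul_cancel hdvd
            rw [h, one_mul] at this
            exact this
          · rintro rfl
            exact Nat.div_self (by omega)
  · have hne : i ≠ n := fun h => hdvd (h ▸ dvd_rfl)
    rw [if_neg hne]
    apply Finset.sum_eq_zero
    intro j _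
    have : ¬ (i * j ∣ n) := fun h => hdvd (dvd_trans (Dvd.intro j rfl) h)
    simp [this]

/-- For every integer `n ≥ 2`, the Möbius function satisfies
`μ(n) = -∑_{i=1}^{⌊√n⌋} ∑_{j=1}^{⌊√n⌋} μ(i)·μ(j)·[i·j ∣ n]`. -/
theorem moebius_double_sum_identity (n : ℕ) (hn : 2 ≤ n) :
    (moebius n : ℤ) =
      -∑ i ∈ Finset.Icc 1 (Nat.sqrt n), ∑ j ∈ Finset.Icc 1 (Nat.sqrt n),
        (moebius i : ℤ) * (moebius j : ℤ) * (if (i * j) ∣ n then 1 else 0) := by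
  set s := Nat.sqrt n with hs
  set f : ℕ → ℕ → ℤ := fun i j =>
    (moebius i : ℤ) * (moebius j : ℤ) * (if (i * j) ∣ n then 1 else 0) with hf
  have hsn : s < n := Nat.sqrt_lt_self (by omega)
  have hsub : Finset.Icc 1 s ⊆ Finset.Icc 1 n := Finset.Icc_subset_Icc_right hsn.le
  -- rows with small i sum to zero (over all j in Icc 1 n)
  have hrow : ∀ i ∈ Finset.Icc 1 n, ∑ j ∈ Finset.Icc 1 n, f i j
      = (moebius i : ℤ) * (if i = n then 1 else 0) := by
    intro i hi
    simp only [Finset.mem_Icc] at hi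
    rw [← inner_sum_eq n i hn hi.1 hi.2, Finset.mul_sum]
    exact Finset.sum_congr rfl fun j _ => by ring
  -- full double sum equals μ n
  have hfull : ∑ i ∈ Finset.Icc 1 n, ∑ j ∈ Finset.Icc 1 n, f i j = (moebius n : ℤ) := by
    rw [Finset.sum_congr rfl hrow]
    rw [Finset.sum_eq_single n]
    · simp
    · intro b _ hb; simp [hb]
    · intro h; simp at h; omega
  -- rows with i ≤ s sum to zero
  have hrow0 : ∀ i ∈ Finset.Icc 1 s, ∑ j ∈ Finset.Icc 1 n, f i j = 0 := by
    intro i hi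
    have hi' := hsub hi
    rw [hrow i hi']
    simp only [Finset.mem_Icc] at hi
    have : i ≠ n := by omega
    simp [this]
  -- columns with j ≤ s sum to zero
  have hcol0 : ∀ j ∈ Finset.Icc 1 s, ∑ i ∈ Finset.Icc 1 n, f i j = 0 := by
    intro j hj
    have hj' := hsub hj
    simp only [Finset.mem_Icc] at hj'
    have : ∑ i ∈ Finset.Icc 1 n, f i j
        = (moebius j : ℤ) * (if j = n then 1 else 0) := by
      rw [← inner_sum_eq n j hn hj'.1 hj'.2, Finset.mul_sum]
      refine Finset.sum_congr rfl fun i _ => ?_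
      simp only [hf, mul_comm j i]
      ring
    rw [this]
    simp only [Finset.mem_Icc] at hj
    have : j ≠ n := by omega
    simp [this]
  -- terms with both indices > s vanish
  have hbig : ∀ i ∈ Finset.Icc 1 n \ Finset.Icc 1 s,
      ∀ j ∈ Finset.Icc 1 n \ Finset.Icc 1 s, f i j = 0 := by
    intro i hi j hj
    simp only [Finset.mem_sdiff, Finset.mem_Icc, not_and, not_le] at hi hj
    have hi' : s + 1 ≤ i := hi.2 hi.1.1
    have hj' : s + 1 ≤ j := hj.2 hj.1.1
    have hlt : n < i * j := by
      calc n < (s + 1) * (s + 1) := Nat.lt_succ_sqrt n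
        _ ≤ i * j := Nat.mul_le_mul hi' hj'
    have : ¬ (i * j ∣ n) := fun h => absurd (Nat.le_of_dvd (by omega) h) (by omega)
    simp [hf, this]
  -- decompose
  have hQQ : ∑ i ∈ Finset.Icc 1 n, ∑ j ∈ Finset.Icc 1 n, f i j
      = ∑ i ∈ Finset.Icc 1 s, ∑ j ∈ Finset.Icc 1 n, f i j
        + ∑ i ∈ Finset.Icc 1 n \ Finset.Icc 1 s, ∑ j ∈ Finset.Icc 1 n, f i j := by
    rw [add_comm, Finset.sum_sdiff hsub]
  have hQrow : ∀ i : ℕ, ∑ j ∈ Finset.Icc 1 n, f i j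
      = ∑ j ∈ Finset.Icc 1 s, f i j + ∑ j ∈ Finset.Icc 1 n \ Finset.Icc 1 s, f i j := by
    intro i; rw [add_comm, Finset.sum_sdiff hsub]
  have h1 : ∑ i ∈ Finset.Icc 1 s, ∑ j ∈ Finset.Icc 1 n, f i j = 0 :=
    Finset.sum_eq_zero hrow0
  have h2 : ∑ i ∈ Finset.Icc 1 n \ Finset.Icc 1 s,
      ∑ j ∈ Finset.Icc 1 n \ Finset.Icc 1 s, f i j = 0 :=
    Finset.sum_eq_zero fun i hi => Finset.sum_eq_zero fun j hj => hbig i hi j hj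
  have h3 : ∑ i ∈ Finset.Icc 1 n \ Finset.Icc 1 s, ∑ j ∈ Finset.Icc 1 n, f i j
      = ∑ i ∈ Finset.Icc 1 n \ Finset.Icc 1 s, ∑ j ∈ Finset.Icc 1 s, f i j := by
    rw [Finset.sum_congr rfl fun i _ => hQrow i, Finset.sum_add_distrib, h2, add_zero]
  -- sum over (Q\P) × P equals μ n
  have hμ : ∑ i ∈ Finset.Icc 1 n \ Finset.Icc 1 s, ∑ j ∈ Finset.Icc 1 s, f i j
      = (moebius n : ℤ) := by
    rw [← h3, ← hfull, hQQ, h1, zero_add]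
  -- sum over Q × P = 0
  have hQP : ∑ i ∈ Finset.Icc 1 n, ∑ j ∈ Finset.Icc 1 s, f i j = 0 := by
    rw [Finset.sum_comm]
    exact Finset.sum_eq_zero hcol0
  have hsplit : ∑ i ∈ Finset.Icc 1 n, ∑ j ∈ Finset.Icc 1 s, f i j
      = ∑ i ∈ Finset.Icc 1 s, ∑ j ∈ Finset.Icc 1 s, f i j
        + ∑ i ∈ Finset.Icc 1 n \ Finset.Icc 1 s, ∑ j ∈ Finset.Icc 1 s, f i j := by
    rw [add_comm, Finset.sum_sdiff hsub]
  rw [hsplit, hμ] at hQP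
  linarith
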